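/- arXiv:2409.01834 — 2 statements merged into one kernel-verified Lean document; each statement's English description precedes it below -/
import Mathlib

section
/- If x solves Tx = βr where r is the indicator vector of a starting vertex s and T = βD + D^{-1}L, then any maximum of x occurs only at s, and x(s) < 1/d(s). -/
/-- If `x` solves `Tx = βr` where `r` is the indicator of the starting vertex `s` and
`T = βD + D⁻¹L`, then any maximum of `x` occurs only at `s`, and `x s < 1/d s`.
The equation is written entrywise:
`(β d(v) + 1) x(v) - (1/d(v)) ∑_{u} w(u,v) x(u) = β r(v)`. -/
theorem max_at_start {n : ℕ} (w : Fin n → Fin n → ℝ)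
    (hsymm : ∀ u v, w u v = w v u) (hnonneg : ∀ u v, 0 ≤ w u v)
    (hloop : ∀ v, w v v = 0)
    (d : Fin n → ℝ) (hdeg : ∀ v, d v = ∑ u, w v u) (hd : ∀ v, 0 < d v)
    (β : ℝ) (hβ : 0 < β ∧ β < 1) (s : Fin n) (x : Fin n → ℝ)
    (hx : ∀ v, (β * d v + 1) * x v - (1 / d v) * ∑ u, w u v * x u =
      β * (if v = s then (1:ℝ) else 0)) :
    (∀ v, (∀ u, x u ≤ x v) → v = s) ∧ x s < 1 / d s := by
  obtain ⟨hβ0, hβ1⟩ := hβ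
  have hsum : ∀ v, ∑ u, w u v = d v := fun v => by
    rw [hdeg]; exact Finset.sum_congr rfl fun u _ => hsymm u v
  -- cleared-denominator form of the equation
  have hS : ∀ v, ∑ u, w u v * x u
      = d v * ((β * d v + 1) * x v - β * (if v = s then (1:ℝ) else 0)) := by
    intro v
    have hne : d v ≠ 0 := ne_of_gt (hd v)
    have h := hx v
    by_cases hvs : v = s
    · rw [if_pos hvs] at h ⊢
      field_simp at h
      linear_combination -h
    · rw [if_neg hvs] at h ⊢
      field_simp at h
      linear_combination -h
  -- nonnegativity of x
  have hnn : ∀ v, 0 ≤ x v := by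
    obtain ⟨v0, -, hv0⟩ := Finset.exists_min_image Finset.univ x ⟨s, Finset.mem_univ s⟩
    intro v
    have hmin : x v0 ≤ x v := hv0 v (Finset.mem_univ v)
    suffices h : 0 ≤ x v0 by linarith
    have hle : d v0 * x v0 ≤ ∑ u, w u v0 * x u := by
      calc d v0 * x v0 = ∑ u, w u v0 * x v0 := by rw [← hsum v0, Finset.sum_mul]
        _ ≤ ∑ u, w u v0 * x u := Finset.sum_le_sum fun u _ =>
            mul_le_mul_of_nonneg_left (hv0 u (Finset.mem_univ u)) (hnonneg u v0)
    have hS0 := hS v0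
    have hdv := hd v0
    have hind : (0:ℝ) ≤ (if v0 = s then (1:ℝ) else 0) := by positivity
    nlinarith [mul_pos hβ0 (mul_pos hdv hdv),
      mul_nonneg (mul_nonneg hβ0.le hdv.le) hind]
  -- part 1: maximum only at s
  have part1 : ∀ v, (∀ u, x u ≤ x v) → v = s := by
    intro v hv
    by_contra hvs
    have hS0 := hS v
    rw [if_neg hvs, mul_zero, sub_zero] at hS0
    have hle : ∑ u, w u v * x u ≤ d v * x v := by
      calc ∑ u, w u v * x u ≤ ∑ u, w u v * x v := Finset.sum_le_sum fun u _ =>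
            mul_le_mul_of_nonneg_left (hv u) (hnonneg u v)
        _ = d v * x v := by rw [← hsum v, Finset.sum_mul]
    have hdv := hd v
    have hxv : x v ≤ 0 := by nlinarith [mul_pos hβ0 (mul_pos hdv hdv)]
    have hall : ∀ u, x u = 0 := fun u => le_antisymm (le_trans (hv u) hxv) (hnn u)
    have hxs := hx s
    rw [if_pos rfl, mul_one] at hxs
    simp only [hall, mul_zero, Finset.sum_const_zero, sub_zero] at hxs
    linarith
  refine ⟨part1, ?_⟩
  -- part 2: x s < 1 / d s
  obtain ⟨vm, -, hvm⟩ := Finset.exists_max_image Finset.univ x ⟨s, Finset.mem_univ s⟩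
  have hvs : vm = s := part1 vm (fun u => hvm u (Finset.mem_univ u))
  have hmax : ∀ u, x u ≤ x s := fun u => hvs ▸ hvm u (Finset.mem_univ u)
  by_contra hcon
  push_neg at hcon
  have hds := hd s
  have hSs := hS s
  rw [if_pos rfl, mul_one] at hSs
  have hle : ∑ u, w u s * x u ≤ d s * x s := by
    calc ∑ u, w u s * x u ≤ ∑ u, w u s * x s := Finset.sum_le_sum fun u _ =>
          mul_le_mul_of_nonneg_left (hmax u) (hnonneg u s)
      _ = d s * x s := by rw [← hsum s, Finset.sum_mul]
  have h1 : 1 ≤ d s * x s := by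
    rw [div_le_iff₀ hds] at hcon
    nlinarith [hcon]
  have hEzero : ∑ u, w u s * (x s - x u) = 0 := by
    have hsplit : ∑ u, w u s * (x s - x u)
        = d s * x s - ∑ u, w u s * x u := by
      rw [← hsum s, Finset.sum_mul, ← Finset.sum_sub_distrib]
      exact Finset.sum_congr rfl fun u _ => by ring
    rw [hsplit]
    have hp : 0 ≤ (β * d s) * (d s * x s - 1) :=
      mul_nonneg (by positivity) (by linarith)
    have hlee : d s * x s - ∑ u, w u s * x u ≤ 0 := by
      rw [hSs]; nlinarith [hp]
    linarith
  have hterm : ∀ u, w u s * (x s - x u) = 0 := by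
    intro u
    have := (Finset.sum_eq_zero_iff_of_nonneg (fun u _ =>
      mul_nonneg (hnonneg u s) (by linarith [hmax u]))).mp hEzero
    exact this u (Finset.mem_univ u)
  obtain ⟨u0, hu0⟩ : ∃ u, 0 < w s u := by
    by_contra h
    push_neg at h
    have : d s ≤ 0 := by
      rw [hdeg]; exact Finset.sum_nonpos fun u _ => h u
    linarith
  have hwu : 0 < w u0 s := by rw [← hsymm]; exact hu0
  have hxu : x u0 = x s := by
    have := hterm u0
    have h0 : x s - x u0 = 0 := by
      rcases mul_eq_zero.mp this with h | h
      · exact absurd h (ne_of_gt hwu)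
      · exact h
    linarith
  have : u0 = s := part1 u0 (fun u' => hxu ▸ hmax u')
  rw [this, hloop] at hu0
  exact lt_irrefl 0 hu0
end

section
/- For the Jacobian J = -TB†KB, where T is nonsingular, B is the incidence matrix of a connected graph on n vertices, and K is diagonal with strictly positive diagonal entries, the kernel of J equals the kernel of B; consequently rank(J) = n - 1. -/
open Matrix

/-- For the Jacobian `J = -T B† K B`, where `T` is nonsingular, `B` is the oriented
incidence matrix of a connected graph on `n` vertices, `B†` its Moore-Penrose inverse,
and `K` is diagonal with strictly positive diagonal entries, the kernel of `J` equals
the kernel of `B`; consequently `rank J = n - 1`. -/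
theorem jacobian_kernel_rank {n m : ℕ} (G : SimpleGraph (Fin n)) (hG : G.Connected)
    (o t : Fin m → Fin n)
    (hedge : ∀ u v, G.Adj u v ↔ ∃ i, (o i = u ∧ t i = v) ∨ (o i = v ∧ t i = u))
    (B : Matrix (Fin m) (Fin n) ℝ)
    (hB : ∀ i j, B i j = if j = t i then 1 else if j = o i then -1 else 0)
    (Bd : Matrix (Fin n) (Fin m) ℝ)
    (h1 : B * Bd * B = B) (h2 : Bd * B * Bd = Bd)
    (h3 : (B * Bd).transpose = B * Bd) (h4 : (Bd * B).transpose = Bd * B)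
    (κ : Fin m → ℝ) (hκ : ∀ i, 0 < κ i)
    (T : Matrix (Fin n) (Fin n) ℝ) (hT : IsUnit T.det)
    (J : Matrix (Fin n) (Fin n) ℝ)
    (hJ : J = -(T * Bd * Matrix.diagonal κ * B)) :
    LinearMap.ker J.mulVecLin = LinearMap.ker B.mulVecLin ∧ J.rank = n - 1 := by
  have hn : Nonempty (Fin n) := hG.nonempty
  have hot : ∀ i, o i ≠ t i := by
    intro i h
    have : G.Adj (t i) (t i) := (hedge _ _).2 ⟨i, Or.inl ⟨h, rfl⟩⟩
    exact G.loopless.irrefl _ this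
  -- mulVec formula
  have hBx : ∀ (x : Fin n → ℝ) (i), B.mulVec x i = x (t i) - x (o i) := by
    intro x i
    have : ∀ j, B i j * x j =
        (if j = t i then x j else 0) + (if j = o i then -x j else 0) := by
      intro j
      rw [hB]
      by_cases hjt : j = t i
      · have hjo : j ≠ o i := fun h => hot i (h.symm.trans hjt)
        simp [hjt, hjo, Ne.symm (hot i)]
      · by_cases hjo : j = o i <;> simp [hjt, hjo, hot i]
    simp only [Matrix.mulVec, dotProduct]
    rw [Finset.sum_congr rfl (fun j _ => this j), Finset.sum_add_distrib,
      Finset.sum_ite_eq' _ (t i) x, Finset.sum_ite_eq' _ (o i) (fun j => -x j)]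
    simp [sub_eq_add_neg]
  -- kernel of B = constants
  have hkerB : ∀ x : Fin n → ℝ, B.mulVec x = 0 ↔ ∃ c : ℝ, x = fun _ => c := by
    intro x
    constructor
    · intro hx
      have heq : ∀ i, x (t i) = x (o i) := by
        intro i
        have := congrFun hx i
        rw [hBx] at this
        simp only [Pi.zero_apply] at this
        linarith
      have hadj : ∀ u v, G.Adj u v → x u = x v := by
        intro u v h
        obtain ⟨i, hi | hi⟩ := (hedge u v).1 h
        · rw [← hi.1, ← hi.2]; exact (heq i).symm
        · rw [← hi.1, ← hi.2]; exact heq i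
      have hreach : ∀ u v : Fin n, x u = x v := by
        intro u v
        obtain ⟨w⟩ := hG.preconnected u v
        induction w with
        | nil => rfl
        | cons h p ih => exact (hadj _ _ h).trans ih
      obtain ⟨u₀⟩ := hn
      exact ⟨x u₀, funext fun v => hreach v u₀⟩
    · rintro ⟨c, rfl⟩
      funext i
      rw [hBx]
      simp
  -- kernel as span of all-ones
  have hspan : LinearMap.ker B.mulVecLin = Submodule.span ℝ {(fun _ => (1:ℝ) : Fin n → ℝ)} := by
    ext x
    rw [LinearMap.mem_ker, Matrix.mulVecLin_apply, Submodule.mem_span_singleton]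
    rw [hkerB]
    constructor
    · rintro ⟨c, rfl⟩; exact ⟨c, by funext j; simp⟩
    · rintro ⟨a, rfl⟩; exact ⟨a, by funext j; simp⟩
  have hones_ne : (fun _ => (1:ℝ) : Fin n → ℝ) ≠ 0 := by
    intro h
    obtain ⟨u₀⟩ := hn
    have := congrFun h u₀
    norm_num at this
  have hdimker : Module.finrank ℝ (LinearMap.ker B.mulVecLin) = 1 := by
    rw [hspan]
    exact finrank_span_singleton hones_ne
  -- T invertibility
  have hTinv : T⁻¹ * T = 1 := Matrix.nonsing_inv_mul T hT
  -- B^T = B^T * B * Bd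
  have hBt : B.transpose = B.transpose * B * Bd := by
    conv_lhs => rw [← h1]
    rw [Matrix.transpose_mul, h3, ← Matrix.mul_assoc]
  -- kernel equality
  have hker : LinearMap.ker J.mulVecLin = LinearMap.ker B.mulVecLin := by
    ext x
    simp only [LinearMap.mem_ker, Matrix.mulVecLin_apply]
    constructor
    · intro hx
      -- J x = 0 → (Bd * D * B) x = 0
      have hM : (Bd * Matrix.diagonal κ * B).mulVec x = 0 := by
        have h0 : (T * (Bd * Matrix.diagonal κ * B)).mulVec x = 0 := by
          have : J.mulVec x = -(T * Bd * Matrix.diagonal κ * B).mulVec x := by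
            rw [hJ]; simp [Matrix.neg_mulVec]
          rw [this] at hx
          have := neg_eq_zero.mp hx
          simp only [Matrix.mul_assoc] at this ⊢
          exact this
        calc (Bd * Matrix.diagonal κ * B).mulVec x
            = (1 * (Bd * Matrix.diagonal κ * B)).mulVec x := by rw [one_mul]
          _ = (T⁻¹ * T * (Bd * Matrix.diagonal κ * B)).mulVec x := by rw [hTinv]
          _ = T⁻¹.mulVec ((T * (Bd * Matrix.diagonal κ * B)).mulVec x) := by
              rw [Matrix.mulVec_mulVec, Matrix.mul_assoc]
          _ = 0 := by rw [h0, Matrix.mulVec_zero]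
      -- then B^T D B x = 0
      have hBtDB : B.transpose.mulVec ((Matrix.diagonal κ).mulVec (B.mulVec x)) = 0 := by
        have e1 : (Matrix.diagonal κ).mulVec (B.mulVec x)
            = (Matrix.diagonal κ * B).mulVec x := Matrix.mulVec_mulVec _ _ _
        rw [e1, hBt]
        have e2 : (Bᵀ * B * Bd).mulVec ((Matrix.diagonal κ * B).mulVec x)
            = (Bᵀ * B).mulVec ((Bd * (Matrix.diagonal κ * B)).mulVec x) := by
          rw [Matrix.mulVec_mulVec, Matrix.mulVec_mulVec, Matrix.mul_assoc]
        rw [e2, ← Matrix.mul_assoc, hM, Matrix.mulVec_zero]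
      -- quadratic form
      set y := B.mulVec x with hy
      have hquad : y ⬝ᵥ (Matrix.diagonal κ).mulVec y = 0 := by
        have := congrArg (fun v => x ⬝ᵥ v) hBtDB
        simp only [dotProduct_zero] at this
        rwa [Matrix.dotProduct_mulVec, Matrix.vecMul_transpose, ← hy] at this
      have hsum : ∑ i, y i * (κ i * y i) = 0 := by
        have : (Matrix.diagonal κ).mulVec y = fun i => κ i * y i := by
          funext i; rw [Matrix.mulVec_diagonal]
        rw [this] at hquad
        exact hquad
      funext i
      simp only [Pi.zero_apply]
      have hterm : ∀ i ∈ Finset.univ, (0:ℝ) ≤ y i * (κ i * y i) := by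
        intro i _
        have h' : y i * (κ i * y i) = κ i * (y i)^2 := by ring
        rw [h']
        exact mul_nonneg (hκ i).le (sq_nonneg _)
      have hz := (Finset.sum_eq_zero_iff_of_nonneg hterm).mp hsum i (Finset.mem_univ i)
      have h0 : κ i * (y i * y i) = 0 := by
        rw [show κ i * (y i * y i) = y i * (κ i * y i) from by ring]; exact hz
      rcases mul_eq_zero.mp h0 with h | h
      · exact absurd h (ne_of_gt (hκ i))
      · exact mul_self_eq_zero.mp h
    · intro hx
      rw [hJ, Matrix.neg_mulVec, ← Matrix.mulVec_mulVec, hx, Matrix.mulVec_zero, neg_zero]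
  refine ⟨hker, ?_⟩
  have hrn : J.rank + Module.finrank ℝ (LinearMap.ker J.mulVecLin) = n := by
    rw [Matrix.rank]
    simpa [Module.finrank_pi] using LinearMap.finrank_range_add_finrank_ker J.mulVecLin
  rw [hker, hdimker] at hrn
  omega
end
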